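/- Let (ξ_k)_{k≥1} be independent real-valued random variables on a probability space such that E[ξ_k] = 0 and E[ξ_k²] > 0 for every k, and suppose there exist real numbers c > 0 and α ≥ −1 such that lim_{k→∞} k^{−α} E[ξ_k²] = c. Then, with probability one, lim_{N→∞} (Σ_{k=1}^N ξ_k)/(Σ_{k=1}^N E[ξ_k²]) = 0. -/

import Mathlib

open MeasureTheory ProbabilityTheory Filter

lemma slln_aux_sum_Icc_eq_range (h : ℕ → ℝ) (N : ℕ) :
    ∑ k ∈ Finset.Icc 1 N, h k = ∑ i ∈ Finset.range N, h (i + 1) := by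
  rw [← Finset.Ico_add_one_right_eq_Icc, Finset.sum_Ico_eq_sum_range]
  simp [add_comm]

lemma slln_aux_kronecker {G X : ℕ → ℝ} (hG : ∀ i, 0 < G i)
    (hB : Tendsto (fun n => ∑ i ∈ Finset.range n, G i) atTop atTop) {L : ℝ}
    (hs : Tendsto (fun n => ∑ i ∈ Finset.range n,
        X i / (∑ j ∈ Finset.range (i + 1), G j)) atTop (nhds L)) :
    Tendsto (fun n => (∑ i ∈ Finset.range n, X i) / (∑ i ∈ Finset.range n, G i))
      atTop (nhds 0) := by
  set B : ℕ → ℝ := fun n => ∑ i ∈ Finset.range n, G i with hBdef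
  set s : ℕ → ℝ := fun n => ∑ i ∈ Finset.range n, X i / B (i + 1) with hsdef
  have hs' : Tendsto s atTop (nhds L) := hs
  have hBpos : ∀ n, 0 < B (n + 1) := fun n =>
    Finset.sum_pos (fun i _ => hG i) ⟨0, by simp⟩
  have key : ∀ n, ∑ i ∈ Finset.range n, X i = B n * s n - ∑ i ∈ Finset.range n, G i * s i := by
    intro n
    induction n with
    | zero => simp [hBdef, hsdef]
    | succ n ih =>
      have hXn : X n = B (n + 1) * (s (n + 1) - s n) := by
        have h1 : s (n + 1) - s n = X n / B (n + 1) := by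
          simp [hsdef, Finset.sum_range_succ]
        rw [h1, mul_div_cancel₀ _ (hBpos n).ne']
      have hBn : B (n + 1) = B n + G n := by simp [hBdef, Finset.sum_range_succ]
      rw [Finset.sum_range_succ, ih, Finset.sum_range_succ (fun i => G i * s i), hXn, hBn]
      ring
  have htend0 : Tendsto (fun i => s i - L) atTop (nhds 0) := by
    simpa using hs'.sub_const L
  have h1 : (fun i => G i * (s i - L)) =o[atTop] G := by
    simpa using (Asymptotics.isBigO_refl G atTop).mul_isLittleO
      ((Asymptotics.isLittleO_one_iff ℝ).2 htend0)
  have ho : (fun n => ∑ i ∈ Finset.range n, G i * (s i - L)) =o[atTop] B :=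
    h1.sum_range (fun i => (hG i).le) hB
  have hdiv : Tendsto (fun n => (∑ i ∈ Finset.range n, G i * (s i - L)) / B n)
      atTop (nhds 0) := ho.tendsto_div_nhds_zero
  have hmain : Tendsto
      (fun n => s n - L - (∑ i ∈ Finset.range n, G i * (s i - L)) / B n) atTop (nhds 0) := by
    simpa using htend0.sub hdiv
  apply hmain.congr'
  filter_upwards [hB.eventually_gt_atTop 0] with n hn
  have hsum : ∑ i ∈ Finset.range n, G i * s i
      = B n * L + ∑ i ∈ Finset.range n, G i * (s i - L) := by
    simp only [hBdef, Finset.sum_mul, ← Finset.sum_add_distrib]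
    apply Finset.sum_congr rfl
    intro i _
    ring
  rw [key, hsum]
  rw [eq_div_iff hn.ne', sub_mul, sub_mul, div_mul_cancel₀ _ hn.ne']
  ring

/-- Strong Law of Large Numbers (Shiryaev, Theorem IV.3.2, first part):
for independent centered random variables `ξ_k` with positive second moments whose
second moments satisfy `k^{-α} E[ξ_k²] → c` for some `c > 0` and `α ≥ -1`, the
normalized sums `(∑_{k=1}^N ξ_k)/(∑_{k=1}^N E[ξ_k²])` tend to `0` almost surely. -/
theorem slln_ratio_tendsto_zero
    {Ω : Type*} [MeasurableSpace Ω] (P : Measure Ω) [IsProbabilityMeasure P]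
    (ξ : ℕ → Ω → ℝ) (hmeas : ∀ k, Measurable (ξ k))
    (hindep : iIndepFun ξ P)
    (hint : ∀ k, 1 ≤ k → Integrable (ξ k) P)
    (hsq : ∀ k, 1 ≤ k → Integrable (fun ω => (ξ k ω) ^ 2) P)
    (hmean : ∀ k, 1 ≤ k → ∫ ω, ξ k ω ∂P = 0)
    (hvarpos : ∀ k, 1 ≤ k → 0 < ∫ ω, (ξ k ω) ^ 2 ∂P)
    (c α : ℝ) (hc : 0 < c) (hα : -1 ≤ α)
    (hlim : Tendsto (fun k : ℕ => (k : ℝ) ^ (-α) * ∫ ω, (ξ k ω) ^ 2 ∂P)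
      atTop (nhds c)) :
    ∀ᵐ ω ∂P, Tendsto
      (fun N : ℕ => (∑ k ∈ Finset.Icc 1 N, ξ k ω) /
        (∑ k ∈ Finset.Icc 1 N, ∫ ω', (ξ k ω') ^ 2 ∂P))
      atTop (nhds 0) := by
  classical
  set σ2 : ℕ → ℝ := fun k => ∫ ω, (ξ k ω) ^ 2 ∂P with hσ2
  set B : ℕ → ℝ := fun n => ∑ k ∈ Finset.Icc 1 n, σ2 k with hBdef
  have hB0 : B 0 = 0 := by simp [hBdef]
  have hσpos : ∀ k, 1 ≤ k → 0 < σ2 k := hvarpos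
  have hBr : ∀ n, B n = ∑ i ∈ Finset.range n, σ2 (i + 1) := fun n =>
    slln_aux_sum_Icc_eq_range σ2 n
  have hBpos : ∀ n, 0 < B (n + 1) := by
    intro n
    rw [hBr]
    exact Finset.sum_pos (fun i _ => hσpos _ (Nat.le_add_left 1 i)) ⟨0, by simp⟩
  have hBmono : Monotone B := by
    intro a b hab
    rw [hBr, hBr]
    apply Finset.sum_le_sum_of_subset_of_nonneg (Finset.range_subset_range.2 hab)
    exact fun i _ _ => (hσpos _ (Nat.le_add_left 1 i)).le
  -- pointwise lower bound on σ2
  have hσlow : ∀ᶠ k : ℕ in atTop, c / 2 * (k : ℝ)⁻¹ ≤ σ2 k := by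
    have hev : ∀ᶠ k : ℕ in atTop, c / 2 < (k : ℝ) ^ (-α) * σ2 k :=
      hlim.eventually (lt_mem_nhds (half_lt_self hc))
    filter_upwards [hev, eventually_ge_atTop 1] with k hk hk1
    have hk1' : (1 : ℝ) ≤ (k : ℝ) := by exact_mod_cast hk1
    have hkpos : (0 : ℝ) < (k : ℝ) := lt_of_lt_of_le one_pos hk1'
    have h3 : (0 : ℝ) < (k : ℝ) ^ (-α) := Real.rpow_pos_of_pos hkpos _
    have h4 : c / 2 * ((k : ℝ) ^ (-α))⁻¹ ≤ σ2 k := by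
      rw [mul_inv_le_iff₀ h3]  -- maybe wrong name; fallback below
      linarith [hk]
    have h5 : ((k : ℝ) ^ (-α))⁻¹ = (k : ℝ) ^ α := by
      rw [Real.rpow_neg hkpos.le, inv_inv]
    have h6 : (k : ℝ)⁻¹ ≤ (k : ℝ) ^ α := by
      rw [← Real.rpow_neg_one]
      exact Real.rpow_le_rpow_of_exponent_le hk1' hα
    rw [h5] at h4
    calc c / 2 * (k : ℝ)⁻¹ ≤ c / 2 * (k : ℝ) ^ α := by
          apply mul_le_mul_of_nonneg_left h6 (by positivity)
      _ ≤ σ2 k := h4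
  -- B tends to infinity
  have hBtop : Tendsto B atTop atTop := by
    obtain ⟨N, hN⟩ := eventually_atTop.mp hσlow
    set H : ℕ → ℝ := fun n => ∑ i ∈ Finset.range n, (1 / ((i : ℝ) + 1)) with hHdef
    have hHtop : Tendsto H atTop atTop := Real.tendsto_sum_range_one_div_nat_succ_atTop
    have hkey : ∀ n, N ≤ n → c / 2 * H n + (-(c / 2 * H N)) ≤ B n := by
      intro n hn
      have h1 : ∑ i ∈ Finset.Ico N n, c / 2 * (1 / ((i : ℝ) + 1))
          ≤ ∑ i ∈ Finset.Ico N n, σ2 (i + 1) := by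
        apply Finset.sum_le_sum
        intro i hi
        have hiN : N ≤ i + 1 := le_trans (Finset.mem_Ico.mp hi).1 (Nat.le_succ i)
        have := hN (i + 1) hiN
        have hcast : ((i + 1 : ℕ) : ℝ) = (i : ℝ) + 1 := by push_cast; ring
        rw [hcast] at this
        calc c / 2 * (1 / ((i : ℝ) + 1)) = c / 2 * ((i : ℝ) + 1)⁻¹ := by rw [one_div]
          _ ≤ σ2 (i + 1) := this
      have h2 : ∑ i ∈ Finset.Ico N n, σ2 (i + 1) ≤ B n := by
        rw [hBr]
        apply Finset.sum_le_sum_of_subset_of_nonneg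
        · rw [Finset.range_eq_Ico]
          exact Finset.Ico_subset_Ico (Nat.zero_le N) le_rfl
        · exact fun i _ _ => (hσpos _ (Nat.le_add_left 1 i)).le
      have h3 : ∑ i ∈ Finset.Ico N n, c / 2 * (1 / ((i : ℝ) + 1))
          = c / 2 * H n - c / 2 * H N := by
        rw [← Finset.mul_sum, hHdef]
        rw [Finset.sum_Ico_eq_sub _ hn]
        ring
      linarith
    apply tendsto_atTop_mono' atTop _ (tendsto_atTop_add_const_right atTop (-(c / 2 * H N))
      (hHtop.const_mul_atTop (half_pos hc)))
    filter_upwards [eventually_ge_atTop N] with n hn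
    exact hkey n hn
  -- the scaled family
  set f : ℕ → Ω → ℝ := fun i ω => (B i)⁻¹ * ξ i ω with hfdef
  have hf0 : f 0 = fun _ => 0 := by
    funext ω; simp [hfdef, hB0]
  have hfmeas : ∀ i, Measurable (f i) := fun i => (hmeas i).const_mul _
  have hfsm : ∀ i, StronglyMeasurable (f i) := fun i => (hfmeas i).stronglyMeasurable
  have hfint : ∀ i, Integrable (f i) P := by
    intro i
    rcases Nat.eq_zero_or_pos i with h | h
    · subst h; rw [hf0]; exact integrable_const 0
    · exact ((hint i h).const_mul _)
  have hfmean : ∀ i, ∫ ω, f i ω ∂P = 0 := by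
    intro i
    rcases Nat.eq_zero_or_pos i with h | h
    · subst h; rw [hf0]; simp
    · simp only [hfdef, integral_const_mul, hmean i h, mul_zero]
  have hfindep : iIndepFun f P := by
    have := hindep.comp (fun i => fun x : ℝ => (B i)⁻¹ * x)
      (fun i => measurable_const_mul _)
    exact this
  have hfℒ2 : ∀ i, MemLp (f i) 2 P := by
    intro i
    rcases Nat.eq_zero_or_pos i with h | h
    · subst h; rw [hf0]; exact memLp_const 0
    · rw [memLp_two_iff_integrable_sq (hfmeas i).aestronglyMeasurable]
      have : (fun ω => (f i ω) ^ 2) = fun ω => ((B i)⁻¹) ^ 2 * (ξ i ω) ^ 2 := by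
        funext ω; simp [hfdef]; ring
      rw [this]
      exact (hsq i h).const_mul _
  have hfvar : ∀ i, variance (f i) P = ((B i)⁻¹) ^ 2 * σ2 i := by
    intro i
    rw [variance_eq_sub (hfℒ2 i)]
    have h1 : ∫ ω, (f i ω) ^ 2 ∂P = ((B i)⁻¹) ^ 2 * σ2 i := by
      rw [hσ2]
      rw [← integral_const_mul]
      apply integral_congr_ae
      filter_upwards with ω
      simp [hfdef]; ring
    have h2 : (P[f i ^ 2] : ℝ) = ∫ ω, (f i ω) ^ 2 ∂P := rfl
    rw [h2, h1, hfmean i]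
    ring
  -- martingale
  set M : ℕ → Ω → ℝ := fun n ω => ∑ i ∈ Finset.range (n + 1), f i ω with hMdef
  set ℱ := Filtration.natural f hfsm with hℱdef
  have hadp : StronglyAdapted ℱ M := by
    intro n
    apply Finset.stronglyMeasurable_fun_sum
    intro i hi
    exact ((Filtration.stronglyAdapted_natural hfsm i).mono
      (ℱ.mono (Nat.lt_succ_iff.mp (Finset.mem_range.mp hi))))
  have hMint : ∀ n, Integrable (M n) P := fun n =>
    integrable_finset_sum _ fun i _ => hfint i
  have hmart : Martingale M ℱ P := by
    apply martingale_nat hadp hMint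
    intro n
    have hsum : M (n + 1) = M n + f (n + 1) := by
      funext ω; simp [hMdef, Finset.sum_range_succ]
    rw [hsum]
    have hadd := condExp_add (μ := P) (m := ℱ n) (hMint n) (hfint (n + 1))
    have hMn : P[M n | ℱ n] =ᵐ[P] M n := by
      rw [condExp_of_stronglyMeasurable (ℱ.le n) (hadp n) (hMint n)]
    have hf1 : P[f (n + 1) | ℱ n] =ᵐ[P] fun _ => (∫ ω, f (n + 1) ω ∂P) :=
      hfindep.condExp_natural_ae_eq_of_lt hfsm (Nat.lt_succ_self n)
    filter_upwards [hadd, hMn, hf1] with ω h1 h2 h3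
    rw [h1]
    simp only [Pi.add_apply]
    rw [h2, h3, hfmean (n + 1), add_zero]
  have hB1 : B 1 = σ2 1 := by simp [hBdef]
  have hBpos' : ∀ m, 1 ≤ m → 0 < B m := by
    intro m hm
    obtain ⟨k, rfl⟩ := Nat.exists_eq_add_of_le hm
    rw [add_comm]
    exact hBpos k
  have hBsucc : ∀ m, B (m + 1) = B m + σ2 (m + 1) := by
    intro m
    rw [hBr, hBr, Finset.sum_range_succ]
  have hvarsum : ∀ n, variance (M n) P = ∑ i ∈ Finset.range (n + 1), (B i)⁻¹ ^ 2 * σ2 i := by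
    intro n
    have hMeq : M n = ∑ i ∈ Finset.range (n + 1), f i := by
      funext ω; rw [Finset.sum_apply]
    rw [hMeq, IndepFun.variance_sum (fun i _ => hfℒ2 i)
      (fun i _ j _ hij => hfindep.indepFun hij)]
    exact Finset.sum_congr rfl fun i _ => hfvar i
  have hclaim : ∀ m, 1 ≤ m →
      ∑ i ∈ Finset.range (m + 1), (B i)⁻¹ ^ 2 * σ2 i ≤ 2 / σ2 1 - 1 / B m := by
    intro m hm
    induction m, hm using Nat.le_induction with
    | base =>
      have : ∑ i ∈ Finset.range 2, (B i)⁻¹ ^ 2 * σ2 i = (B 1)⁻¹ ^ 2 * σ2 1 := by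
        rw [Finset.sum_range_succ, Finset.sum_range_one, hB0]
        simp
      rw [this, hB1]
      have h1 : (0 : ℝ) < σ2 1 := hσpos 1 le_rfl
      field_simp
      norm_num
    | succ m hm ih =>
      rw [Finset.sum_range_succ]
      have hstep : (B (m + 1))⁻¹ ^ 2 * σ2 (m + 1) ≤ 1 / B m - 1 / B (m + 1) := by
        have h0 : 0 < B m := hBpos' m hm
        have h1 : B m < B (m + 1) := by
          rw [hBsucc m]
          have := hσpos (m + 1) (Nat.le_add_left 1 m)
          linarith
        have h2 : σ2 (m + 1) = B (m + 1) - B m := by rw [hBsucc m]; ring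
        rw [h2]
        have h3 : (B (m + 1))⁻¹ ^ 2 * (B (m + 1) - B m)
            = (B (m + 1) - B m) / (B (m + 1) * B (m + 1)) := by
          field_simp
        have hB1pos : (0 : ℝ) < B (m + 1) := h0.trans h1
        have h4 : 1 / B m - 1 / B (m + 1) = (B (m + 1) - B m) / (B m * B (m + 1)) := by
          rw [div_sub_div _ _ h0.ne' hB1pos.ne', one_mul, mul_one]
        rw [h3, h4]
        apply div_le_div_of_nonneg_left (by linarith) (mul_pos h0 hB1pos)
        nlinarith
      linarith
  -- variance bound
  have hvarM : ∀ n, variance (M n) P ≤ 2 / σ2 1 := by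
    intro n
    rcases Nat.eq_zero_or_pos n with h | h
    · subst h
      rw [hvarsum]
      have h1 : (0 : ℝ) < σ2 1 := hσpos 1 le_rfl
      simp [hB0]
      positivity
    · have h2 := hclaim n h
      have h3 : 0 < B n := hBpos' n h
      rw [hvarsum]
      have : 0 < 1 / B n := by positivity
      linarith
  -- L1 bound
  set R : NNReal := Real.toNNReal (Real.sqrt (2 / σ2 1)) with hRdef
  have hMℒ2 : ∀ n, MemLp (M n) 2 P := fun n =>
    memLp_finset_sum _ (fun i _ => hfℒ2 i)
  have hMmean : ∀ n, ∫ ω, M n ω ∂P = 0 := by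
    intro n
    rw [hMdef]
    rw [integral_finset_sum _ (fun i _ => hfint i)]
    exact Finset.sum_eq_zero fun i _ => hfmean i
  have hKpos : (0 : ℝ) < 2 / σ2 1 := by
    have := hσpos 1 le_rfl
    positivity
  have hbdd : ∀ n, eLpNorm (M n) 1 P ≤ (R : ENNReal) := by
    intro n
    have h1 : eLpNorm (M n) 1 P ≤ eLpNorm (M n) 2 P :=
      eLpNorm_le_eLpNorm_of_exponent_le one_le_two (hMℒ2 n).aestronglyMeasurable
    have h2 : eLpNorm (M n) 2 P = evariance (M n) P ^ (1 / 2 : ℝ) := by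
      rw [eLpNorm_eq_lintegral_rpow_enorm_toReal two_ne_zero ENNReal.ofNat_ne_top]
      have hev : evariance (M n) P = ∫⁻ ω, (‖M n ω‖₊ : ENNReal) ^ 2 ∂P := by
        rw [evariance]
        congr 1
        funext ω
        rw [hMmean n, sub_zero]
        rw [enorm_eq_nnnorm]
      rw [hev]
      rw [ENNReal.toReal_ofNat]
      congr 1
      apply lintegral_congr
      intro ω
      rw [← ENNReal.rpow_two]
      rw [enorm_eq_nnnorm]
    have h3 : evariance (M n) P = ENNReal.ofReal (variance (M n) P) :=
      ((hMℒ2 n).ofReal_variance_eq).symm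
    have h4 : evariance (M n) P ≤ ENNReal.ofReal (2 / σ2 1) := by
      rw [h3]
      exact ENNReal.ofReal_le_ofReal (hvarM n)
    calc eLpNorm (M n) 1 P ≤ eLpNorm (M n) 2 P := h1
      _ = evariance (M n) P ^ (1 / 2 : ℝ) := h2
      _ ≤ ENNReal.ofReal (2 / σ2 1) ^ (1 / 2 : ℝ) :=
          ENNReal.rpow_le_rpow h4 (by norm_num)
      _ = ENNReal.ofReal ((2 / σ2 1) ^ (1 / 2 : ℝ)) :=
          (ENNReal.ofReal_rpow_of_pos hKpos)
      _ = (R : ENNReal) := by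
          rw [hRdef, Real.sqrt_eq_rpow, ENNReal.ofReal]
  have hconv := (hmart.submartingale.exists_ae_tendsto_of_bdd hbdd)
  filter_upwards [hconv] with ω hω
  obtain ⟨L, hL⟩ := hω
  have hs : Tendsto (fun n => ∑ i ∈ Finset.range n,
      ξ (i + 1) ω / (∑ j ∈ Finset.range (i + 1), σ2 (j + 1))) atTop (nhds L) := by
    apply hL.congr
    intro n
    simp only [hMdef]
    rw [Finset.sum_range_succ' (fun i => f i ω) n]
    simp only [hf0, add_zero]
    apply Finset.sum_congr rfl
    intro i _
    rw [hfdef]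
    rw [← hBr (i + 1), div_eq_inv_mul]
  have hkron := slln_aux_kronecker
    (G := fun i => σ2 (i + 1)) (X := fun i => ξ (i + 1) ω)
    (fun i => hσpos _ (Nat.le_add_left 1 i))
    (hBtop.congr hBr) hs
  apply hkron.congr
  intro N
  rw [← slln_aux_sum_Icc_eq_range (fun k => ξ k ω) N, ← slln_aux_sum_Icc_eq_range σ2 N]
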